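/- For every matrix A ∈ 𝕋±^{d×n}, the set {(x,z) ∈ 𝕋±^{n+d} : A⊙x ⋈ z componentwise and x ≥ 𝟘 componentwise} is tropically convex. -/
import Mathlib


/-!  Signed tropical numbers 𝕋±, the symmetrized tropical semiring 𝕊,
     and signed tropical convexity (Loho–Végh). -/

inductive SSign : Type where
  | pos : SSign
  | neg : SSign
  | bal : SSign
deriving DecidableEq

/-- The symmetrized tropical semiring 𝕊: the tropical zero 𝟘 = -∞ together with
elements `elem s r` where `s` is a sign (⊕, ⊖ or •) and `r` a real number. -/
inductive STrop : Type where
  | zero : STrop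
  | elem : SSign → ℝ → STrop

namespace STrop

/-- membership in the signed tropical numbers 𝕋± (i.e. not balanced-nonzero). -/
def isSigned : STrop → Prop
  | elem SSign.bal _ => False
  | _ => True

/-- membership in 𝕋≥, the nonnegative tropical numbers. -/
def nneg : STrop → Prop
  | zero => True
  | elem SSign.pos _ => True
  | _ => False

/-- membership in 𝕋≤, the nonpositive tropical numbers. -/
def npos : STrop → Prop
  | zero => True
  | elem SSign.neg _ => True
  | _ => False

/-- strictly positive signed element (sign ⊕, not 𝟘). -/
def isPos : STrop → Prop
  | elem SSign.pos _ => True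
  | _ => False

/-- balanced or 𝟘 (membership in 𝕋•). -/
def balZero : STrop → Prop
  | zero => True
  | elem SSign.bal _ => True
  | _ => False

/-- the negation map ⊖. -/
def neg : STrop → STrop
  | zero => zero
  | elem SSign.pos r => elem SSign.neg r
  | elem SSign.neg r => elem SSign.pos r
  | elem SSign.bal r => elem SSign.bal r

/-- tropical addition ⊕ on 𝕊. -/
noncomputable def add : STrop → STrop → STrop
  | zero, y => y
  | x, zero => x
  | elem s r, elem t u =>
    if r < u then elem t u
    else if u < r then elem s r
    else if s = t then elem s r
    else elem SSign.bal r

def signMul : SSign → SSign → SSign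
  | SSign.pos, t => t
  | SSign.neg, SSign.pos => SSign.neg
  | SSign.neg, SSign.neg => SSign.pos
  | SSign.neg, SSign.bal => SSign.bal
  | SSign.bal, _ => SSign.bal

/-- tropical multiplication ⊙ on 𝕊. -/
def mul : STrop → STrop → STrop
  | zero, _ => zero
  | _, zero => zero
  | elem s r, elem t u => elem (signMul s t) (r + u)

/-- a ⊖ b := a ⊕ (⊖b). -/
noncomputable def sub (x y : STrop) : STrop := add x (neg y)

/-- the tropical one, the signed element ⊕0. -/
def one : STrop := elem SSign.pos 0

/-- the absolute value |·| : 𝕊 → 𝕋≥. -/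
def absS : STrop → STrop
  | zero => zero
  | elem _ r => elem SSign.pos r

/-- strict order: x > y iff x ⊖ y is a strictly positive signed element. -/
def sgt (x y : STrop) : Prop := isPos (sub x y)

/-- balance relation: x ⋈ y iff x ⊖ y is balanced or 𝟘. -/
def bal (x y : STrop) : Prop := balZero (sub x y)

/-- the relation ⊵ : x ⊵ y iff x > y or x ⋈ y. -/
def teq (x y : STrop) : Prop := sgt x y ∨ bal x y

/-- the total order ≤ on the signed tropical numbers 𝕋±
(arbitrarily `False` whenever a balanced element is involved). -/
def sle : STrop → STrop → Prop
  | zero, zero => True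
  | zero, elem SSign.pos _ => True
  | elem SSign.neg _, zero => True
  | elem SSign.neg _, elem SSign.pos _ => True
  | elem SSign.pos r, elem SSign.pos u => r ≤ u
  | elem SSign.neg r, elem SSign.neg u => u ≤ r
  | _, _ => False

/-- U(a): the set of signed numbers incomparable with a; the singleton {a}
for signed a, and the order interval [⊖|a|, |a|] for balanced a. -/
def U : STrop → Set STrop
  | elem SSign.bal r => {x | isSigned x ∧ sle (elem SSign.neg r) x ∧ sle x (elem SSign.pos r)}
  | a => {a}

/-- tropical sum of finitely many elements of 𝕊. -/
noncomputable def sumFin : ∀ {n : ℕ}, (Fin n → STrop) → STrop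
  | 0, _ => zero
  | _ + 1, f => add (f 0) (sumFin fun i => f i.succ)

/-- matrix–vector product A ⊙ x over 𝕊. -/
noncomputable def mv {d n : ℕ} (A : Fin d → Fin n → STrop) (x : Fin n → STrop) : Fin d → STrop :=
  fun i => sumFin fun j => mul (A i j) (x j)

/-- vectors in 𝕋±^d. -/
def isSignedVec {d : ℕ} (v : Fin d → STrop) : Prop := ∀ i, isSigned (v i)

/-- the signed tropical convex hull of the columns of a matrix A:
tconv(A) = {z ∈ 𝕋±^d : z ⋈ A⊙x for some x ∈ 𝕋≥^n with ⊕_j x_j = 0}. -/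
def tconv {d n : ℕ} (A : Fin d → Fin n → STrop) : Set (Fin d → STrop) :=
  {z | isSignedVec z ∧ ∃ x : Fin n → STrop,
    (∀ j, nneg (x j)) ∧ sumFin x = one ∧ ∀ i, bal (z i) (mv A x i)}

/-- the signed tropical convex hull of an arbitrary set: the union of the hulls
of all finite collections of points of M. -/
def tconvSet {d : ℕ} (M : Set (Fin d → STrop)) : Set (Fin d → STrop) :=
  ⋃ (n : ℕ) (A : Fin d → Fin n → STrop) (_ : ∀ j, (fun i => A i j) ∈ M), tconv A

/-- a set M ⊆ 𝕋±^d is tropically convex iff M = tconv(M). -/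
def TropConvex {d : ℕ} (M : Set (Fin d → STrop)) : Prop := M = tconvSet M

/-- evaluation a ⊙ (0, x₁, …, x_d)ᵀ of an affine functional. -/
noncomputable def affEval {d : ℕ} (a : Fin (d + 1) → STrop) (x : Fin d → STrop) : STrop :=
  sumFin fun j => mul (a j) ((Fin.cons one x : Fin (d + 1) → STrop) j)

/-- the open signed tropical halfspace H⁺(a) = {x ∈ 𝕋±^d : a⊙(0,x)ᵀ > 𝟘}. -/
def Hopen {d : ℕ} (a : Fin (d + 1) → STrop) : Set (Fin d → STrop) :=
  {x | isSignedVec x ∧ sgt (affEval a x) zero}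

/-- the closed signed tropical halfspace H̄⁺(a) = {x ∈ 𝕋±^d : a⊙(0,x)ᵀ ⊵ 𝟘}. -/
def Hclosed {d : ℕ} (a : Fin (d + 1) → STrop) : Set (Fin d → STrop) :=
  {x | isSignedVec x ∧ teq (affEval a x) zero}

/-- the non-negative kernel nnker(A). -/
def nnker {d n : ℕ} (A : Fin d → Fin n → STrop) : Set (Fin n → STrop) :=
  {x | (∀ j, nneg (x j)) ∧ x ≠ (fun _ => zero) ∧ ∀ i, balZero (mv A x i)}

/-- the open tropical cone sep(A) = {y ∈ 𝕋±^d : yᵀ⊙A > 𝟘 componentwise}. -/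
def sep {d : ℕ} {J : Type} (A : Fin d → J → STrop) : Set (Fin d → STrop) :=
  {y | isSignedVec y ∧ ∀ j, isPos (sumFin fun i => mul (y i) (A i j))}

end STrop
namespace STrop

theorem add_zero' (x : STrop) : add x zero = x := by cases x <;> rfl

theorem zero_add' (x : STrop) : add zero x = x := by cases x <;> rfl

theorem add_elem_elem (s t : SSign) (r u : ℝ) :
    add (elem s r) (elem t u) = if r < u then elem t u else if u < r then elem s r
      else if s = t then elem s r else elem SSign.bal r := rfl

theorem add_comm' (x y : STrop) : add x y = add y x := by
  cases x with
  | zero => rw [zero_add', add_zero']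
  | elem s r => cases y with
    | zero => rw [zero_add', add_zero']
    | elem t u =>
      rw [add_elem_elem, add_elem_elem]
      split_ifs <;> simp_all <;> linarith

theorem add_assoc' (a b c : STrop) : add (add a b) c = add a (add b c) := by
  cases a with
  | zero => rw [zero_add', zero_add']
  | elem s r => cases b with
    | zero => rw [add_zero', zero_add']
    | elem t u => cases c with
      | zero => rw [add_zero', add_zero']
      | elem p v =>
        simp only [add_elem_elem]
        split_ifs <;> simp only [add_elem_elem] <;> split_ifs <;>
          simp_all <;> try linarith

end STrop
namespace STrop

theorem mul_zero' (x : STrop) : mul x zero = zero := by cases x <;> rfl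

theorem zero_mul' (x : STrop) : mul zero x = zero := by cases x <;> rfl

theorem mul_elem_elem (s t : SSign) (r u : ℝ) :
    mul (elem s r) (elem t u) = elem (signMul s t) (r + u) := rfl

theorem signMul_comm (s t : SSign) : signMul s t = signMul t s := by
  cases s <;> cases t <;> rfl

theorem signMul_assoc (s t p : SSign) :
    signMul (signMul s t) p = signMul s (signMul t p) := by
  cases s <;> cases t <;> cases p <;> rfl

theorem mul_comm' (x y : STrop) : mul x y = mul y x := by
  cases x <;> cases y <;>
    simp [mul_elem_elem, signMul_comm, add_comm, mul_zero', mul]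

theorem mul_assoc' (a b c : STrop) : mul (mul a b) c = mul a (mul b c) := by
  cases a <;> cases b <;> cases c <;>
    simp [mul_elem_elem, signMul_assoc, add_assoc, mul_zero', mul]

theorem mul_one' (x : STrop) : mul x one = x := by
  cases x with
  | zero => rfl
  | elem s r => show elem (signMul s SSign.pos) (r + 0) = elem s r
                cases s <;> simp [signMul]

theorem mul_add' (a b c : STrop) : mul a (add b c) = add (mul a b) (mul a c) := by
  cases a with
  | zero => rw [zero_mul', zero_mul', zero_mul', zero_add']
  | elem q w => cases b with
    | zero => rw [zero_add', mul_zero', zero_add']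
    | elem s r => cases c with
      | zero => rw [add_zero', mul_zero', add_zero']
      | elem t u =>
        rw [add_elem_elem]
        cases q <;> cases s <;> cases t <;>
        (split_ifs <;>
          simp only [mul_elem_elem, signMul, add_elem_elem] <;>
          split_ifs <;> simp_all <;> linarith)

end STrop
namespace STrop

theorem sumFin_congr {n : ℕ} {f g : Fin n → STrop} (h : ∀ i, f i = g i) :
    sumFin f = sumFin g := congrArg sumFin (funext h)

theorem sumFin_succ {n : ℕ} (f : Fin (n + 1) → STrop) :
    sumFin f = add (f 0) (sumFin fun i => f i.succ) := rfl

theorem add_add_add_comm' (a b c d : STrop) :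
    add (add a b) (add c d) = add (add a c) (add b d) := by
  rw [add_assoc', add_assoc', ← add_assoc' b, add_comm' b c, add_assoc']

theorem sumFin_add {n : ℕ} (f g : Fin n → STrop) :
    sumFin (fun k => add (f k) (g k)) = add (sumFin f) (sumFin g) := by
  induction n with
  | zero => rfl
  | succ m ih =>
    rw [sumFin_succ, sumFin_succ f, sumFin_succ g]
    show add (add (f 0) (g 0)) (sumFin fun k => add (f k.succ) (g k.succ)) = _
    rw [ih, add_add_add_comm']

theorem mul_sumFin {n : ℕ} (a : STrop) (f : Fin n → STrop) :
    mul a (sumFin f) = sumFin (fun k => mul a (f k)) := by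
  induction n with
  | zero => exact mul_zero' a
  | succ m ih => rw [sumFin_succ, sumFin_succ (fun k => mul a (f k)), mul_add', ih]

theorem sumFin_swap {n m : ℕ} (f : Fin n → Fin m → STrop) :
    sumFin (fun j => sumFin fun k => f j k) = sumFin (fun k => sumFin fun j => f j k) := by
  induction n with
  | zero =>
    induction m with
    | zero => rfl
    | succ m' ih => rw [sumFin_succ]; exact (zero_add' _).symm.trans (by rw [← ih]; rfl)
  | succ n' ih =>
    rw [sumFin_succ, ih, ← sumFin_add]
    exact sumFin_congr fun k => (sumFin_succ fun j => f j k).symm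

theorem nneg_add {a b : STrop} (ha : nneg a) (hb : nneg b) : nneg (add a b) := by
  cases a with
  | zero => rwa [zero_add']
  | elem s r => cases b with
    | zero => rwa [add_zero']
    | elem t u =>
      cases s <;> cases t <;> rw [add_elem_elem] <;> split_ifs <;> simp_all [nneg]

theorem nneg_mul {a b : STrop} (ha : nneg a) (hb : nneg b) : nneg (mul a b) := by
  cases a with
  | zero => rw [zero_mul']; trivial
  | elem s r => cases b with
    | zero => rw [mul_zero']; trivial
    | elem t u => cases s <;> cases t <;> simp_all [nneg, mul_elem_elem, signMul]

theorem nneg_sumFin {n : ℕ} {f : Fin n → STrop} (h : ∀ k, nneg (f k)) :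
    nneg (sumFin f) := by
  induction n with
  | zero => trivial
  | succ m ih => exact nneg_add (h 0) (ih fun k => h k.succ)

theorem neg_neg' (x : STrop) : neg (neg x) = x := by
  cases x with
  | zero => rfl
  | elem s r => cases s <;> rfl

theorem neg_add' (a b : STrop) : neg (add a b) = add (neg a) (neg b) := by
  cases a with
  | zero => rw [zero_add']; exact (zero_add' _).symm
  | elem s r => cases b with
    | zero => rw [add_zero']; exact (add_zero' _).symm
    | elem t u =>
      rw [add_elem_elem]
      cases s <;> cases t <;> split_ifs <;>
        simp_all [neg, add_elem_elem] <;> split_ifs <;> simp_all <;> linarith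

theorem balZero_neg {a : STrop} (h : balZero a) : balZero (neg a) := by
  cases a with
  | zero => trivial
  | elem s r => cases s <;> simp_all [balZero, neg]

theorem bal_symm {a b : STrop} (h : bal a b) : bal b a := by
  unfold bal sub at *
  have : add b (neg a) = neg (add a (neg b)) := by rw [neg_add', neg_neg', add_comm']
  rw [this]; exact balZero_neg h

theorem bal_refl (a : STrop) : bal a a := by
  cases a with
  | zero => trivial
  | elem s r =>
    unfold bal sub
    cases s <;> simp [neg, add_elem_elem, balZero]

end STrop
namespace STrop

/-- absolute-value comparison. -/
def ale : STrop → STrop → Prop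
  | zero, _ => True
  | elem _ _, zero => False
  | elem _ r, elem _ u => r ≤ u

/-- the key auxiliary relation: `b` equals `a`, or `b` is balanced (or 𝟘) with
`|a| ≤ |b|`. -/
def P (a b : STrop) : Prop := b = a ∨ (balZero b ∧ ale a b)

theorem ale_refl (a : STrop) : ale a a := by
  cases a <;> simp [ale]

theorem ale_trans {a b c : STrop} (h1 : ale a b) (h2 : ale b c) : ale a c := by
  cases a <;> cases b <;> cases c <;> simp_all [ale] <;> linarith

theorem P_refl (a : STrop) : P a a := Or.inl rfl

theorem ale_add {a b c d : STrop} (h1 : ale a b) (h2 : ale c d) :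
    ale (add a c) (add b d) := by
  cases a <;> cases b <;> cases c <;> cases d <;>
    simp_all [ale, zero_add', add_zero', add_elem_elem] <;>
    split_ifs <;> simp_all [ale] <;> linarith

theorem balZero_add {b d : STrop} (hb : balZero b) (hd : balZero d) :
    balZero (add b d) := by
  cases b with
  | zero => rwa [zero_add']
  | elem s r => cases d with
    | zero => rwa [add_zero']
    | elem t u =>
      cases s <;> cases t <;> simp_all [balZero, add_elem_elem] <;>
        split_ifs <;> simp [balZero]

theorem balZero_mul_right {b : STrop} (l : STrop) (hb : balZero b) :
    balZero (mul l b) := by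
  cases l with
  | zero => rw [zero_mul']; trivial
  | elem q w => cases b with
    | zero => rw [mul_zero']; trivial
    | elem t u => cases q <;> cases t <;> simp_all [balZero, mul_elem_elem, signMul]

theorem ale_mul_left {a b : STrop} (l : STrop) (h : ale a b) :
    ale (mul l a) (mul l b) := by
  cases l with
  | zero => rw [zero_mul', zero_mul']; trivial
  | elem q w => cases a with
    | zero => rw [mul_zero']; trivial
    | elem s r => cases b with
      | zero => exact h.elim
      | elem t u =>
        have h' : r ≤ u := h
        simp only [mul_elem_elem, ale]
        linarith

theorem P_trans {a b c : STrop} (h1 : P a b) (h2 : P b c) : P a c := by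
  rcases h1 with rfl | ⟨hb, hab⟩
  · exact h2
  · rcases h2 with rfl | ⟨hc, hbc⟩
    · exact Or.inr ⟨hb, hab⟩
    · exact Or.inr ⟨hc, ale_trans hab hbc⟩

theorem P_mul_left {a b : STrop} (l : STrop) (h : P a b) : P (mul l a) (mul l b) := by
  rcases h with rfl | ⟨hb, hab⟩
  · exact P_refl _
  · exact Or.inr ⟨balZero_mul_right l hb, ale_mul_left l hab⟩

theorem P_add_right (a : STrop) {c d : STrop} (hd : balZero d) (hcd : ale c d) :
    P (add a c) (add a d) := by
  cases d with
  | zero =>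
    cases c with
    | zero => exact P_refl _
    | elem t rc => exact hcd.elim
  | elem dt u =>
    cases dt with
    | pos => exact hd.elim
    | neg => exact hd.elim
    | bal =>
      cases c with
      | zero =>
        cases a with
        | zero =>
          rw [zero_add', zero_add']
          exact Or.inr ⟨by simp [balZero], trivial⟩
        | elem s r =>
          rw [add_zero', add_elem_elem]
          rcases lt_trichotomy r u with h | h | h
          · rw [if_pos h]
            exact Or.inr ⟨by simp [balZero], le_of_lt h⟩
          · subst h
            rw [if_neg (lt_irrefl r), if_neg (lt_irrefl r)]
            by_cases hs : s = SSign.bal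
            · rw [if_pos hs, hs]; exact P_refl _
            · rw [if_neg hs]
              exact Or.inr ⟨by simp [balZero], le_refl r⟩
          · rw [if_neg (by linarith), if_pos h]
            exact P_refl _
      | elem t rc =>
        have hrc : rc ≤ u := hcd
        cases a with
        | zero =>
          rw [zero_add', zero_add']
          exact Or.inr ⟨by simp [balZero], hrc⟩
        | elem s r =>
          rw [add_elem_elem, add_elem_elem]
          rcases lt_trichotomy r u with h | h | h
          · rw [if_pos h]
            refine Or.inr ⟨by simp [balZero], ?_⟩
            split_ifs <;> simp [ale] <;> linarith
          · subst h
            rw [if_neg (lt_irrefl r), if_neg (lt_irrefl r)]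
            have hbal : (if s = SSign.bal then elem s r else elem SSign.bal r)
                = elem SSign.bal r := by
              by_cases hs : s = SSign.bal
              · rw [if_pos hs, hs]
              · rw [if_neg hs]
            rw [hbal]
            refine Or.inr ⟨by simp [balZero], ?_⟩
            split_ifs <;> simp [ale] <;> linarith
          · have h1 : ¬ r < u := by linarith
            have h2 : rc < r := by linarith
            rw [if_neg h1, if_pos h]
            rw [if_neg (by linarith : ¬ r < rc), if_pos h2]
            exact P_refl _

end STrop
namespace STrop

theorem P_add {a b c d : STrop} (h1 : P a b) (h2 : P c d) :
    P (add a c) (add b d) := by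
  rcases h1 with rfl | ⟨hb, hab⟩
  · rcases h2 with rfl | ⟨hd, hcd⟩
    · exact P_refl _
    · exact P_add_right b hd hcd
  · rcases h2 with rfl | ⟨hd, hcd⟩
    · rw [add_comm' a d, add_comm' b d]
      exact P_add_right d hb hab
    · exact Or.inr ⟨balZero_add hb hd, ale_add hab hcd⟩

theorem P_sum {n : ℕ} {f g : Fin n → STrop} (h : ∀ k, P (f k) (g k)) :
    P (sumFin f) (sumFin g) := by
  induction n with
  | zero => exact P_refl _
  | succ m ih =>
    rw [sumFin_succ f, sumFin_succ g]
    exact P_add (h 0) (ih fun k => h k.succ)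

theorem P_of_bal {z y : STrop} (hz : isSigned z) (h : bal z y) : P z y := by
  cases z with
  | zero =>
    cases y with
    | zero => exact P_refl _
    | elem t u =>
      cases t <;> simp_all [bal, sub, neg, zero_add', balZero, P, ale]
  | elem s r =>
    cases y with
    | zero =>
      cases s <;> simp_all [bal, sub, neg, add_zero', balZero, isSigned]
    | elem t u =>
      cases s <;> cases t <;>
        simp_all [bal, sub, neg, add_elem_elem, isSigned] <;>
        split_ifs at * <;>
        simp_all [balZero, P, ale] <;>
        linarith

theorem bal_of_P {z y : STrop} (h : P z y) : bal z y := by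
  rcases h with rfl | ⟨hb, hle⟩
  · exact bal_refl _
  · cases y with
    | zero =>
      cases z with
      | zero => trivial
      | elem s r => exact hle.elim
    | elem t u =>
      cases t with
      | pos => exact hb.elim
      | neg => exact hb.elim
      | bal =>
        cases z with
        | zero => simp [bal, sub, zero_add', neg, balZero]
        | elem s r =>
          have hr : r ≤ u := hle
          show balZero (add (elem s r) (neg (elem SSign.bal u)))
          rw [show neg (elem SSign.bal u) = elem SSign.bal u from rfl, add_elem_elem]
          split_ifs with h1 h2 h3
          · simp [balZero]
          · exact absurd h2 (not_lt.mpr hr)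
          · simp [h3, balZero]
          · simp [balZero]

theorem eq_of_P_nneg {w s : STrop} (h : P w s) (hs : nneg s) : w = s := by
  rcases h with rfl | ⟨hb, hle⟩
  · rfl
  · cases s with
    | zero =>
      cases w with
      | zero => rfl
      | elem t r => exact hle.elim
    | elem t u => cases t <;> simp_all [balZero, nneg]

theorem nneg_isSigned {a : STrop} (h : nneg a) : isSigned a := by
  cases a with
  | zero => trivial
  | elem s r => cases s <;> simp_all [nneg, isSigned]

theorem mv_mix {d n m : ℕ} (A : Fin d → Fin n → STrop) (X : Fin n → Fin m → STrop)
    (l : Fin m → STrop) (i : Fin d) :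
    mv A (fun j => sumFin fun k => mul (X j k) (l k)) i
      = sumFin fun k => mul (l k) (mv A (fun j => X j k) i) := by
  show sumFin (fun j => mul (A i j) (sumFin fun k => mul (X j k) (l k))) = _
  have step1 : ∀ j, mul (A i j) (sumFin fun k => mul (X j k) (l k))
      = sumFin fun k => mul (l k) (mul (A i j) (X j k)) := by
    intro j
    rw [mul_sumFin]
    refine sumFin_congr fun k => ?_
    rw [mul_comm' (X j k) (l k), ← mul_assoc', mul_comm' (A i j) (l k), mul_assoc']
  rw [sumFin_congr step1, sumFin_swap]
  exact sumFin_congr fun k => (mul_sumFin (l k) _).symm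

end STrop
open STrop in
/-- the set {(x,z) ∈ 𝕋±^{n+d} : A⊙x ⋈ z, x ≥ 𝟘} is tropically
convex. -/
theorem convexity_cone_preimage (d n : ℕ) (A : Fin d → Fin n → STrop)
    (hA : ∀ i j, STrop.isSigned (A i j)) :
    STrop.TropConvex {w : Fin (n + d) → STrop |
      (∀ j : Fin n, STrop.nneg (w (Fin.castAdd d j))) ∧
      (∀ i : Fin d, STrop.isSigned (w (Fin.natAdd n i))) ∧
      (∀ i : Fin d,
        STrop.bal (STrop.mv A (fun j => w (Fin.castAdd d j)) i)
          (w (Fin.natAdd n i)))} := by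
  apply Set.Subset.antisymm
  · -- M ⊆ tconvSet M
    intro w hw
    simp only [tconvSet, Set.mem_iUnion]
    refine ⟨1, fun i _ => w i, fun _ => hw, ?_, fun _ => one, fun _ => trivial, ?_, ?_⟩
    · intro i
      refine Fin.addCases (fun j => nneg_isSigned (hw.1 j)) (fun j => hw.2.1 j) i
    · show add one (sumFin fun i : Fin 0 => one) = one
      exact add_zero' one
    · intro i
      have h1 : mv (n := 1) (fun i _ => w i) (fun _ => one) i = w i := by
        show add (mul (w i) one) (sumFin fun _ : Fin 0 => mul (w i) one) = w i
        rw [show (sumFin fun _ : Fin 0 => mul (w i) one) = zero from rfl,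
          add_zero', mul_one']
      rw [h1]; exact bal_refl _
  · -- tconvSet M ⊆ M
    intro w hw
    simp only [tconvSet, Set.mem_iUnion] at hw
    obtain ⟨m, B, hB, hsg, lam, hl1, hl2, hl3⟩ := hw
    have hx : ∀ j : Fin n, w (Fin.castAdd d j) = mv B lam (Fin.castAdd d j) := by
      intro j
      refine eq_of_P_nneg (P_of_bal (hsg _) (hl3 _)) ?_
      exact nneg_sumFin fun k => nneg_mul ((hB k).1 j) (hl1 k)
    refine ⟨?_, fun i => hsg _, ?_⟩
    · intro j
      rw [hx j]
      exact nneg_sumFin fun k => nneg_mul ((hB k).1 j) (hl1 k)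
    · intro i
      have hS : mv B lam (Fin.natAdd n i)
          = sumFin fun k => mul (lam k) (B (Fin.natAdd n i) k) :=
        sumFin_congr fun k => mul_comm' _ _
      have hP1 : P (w (Fin.natAdd n i))
          (sumFin fun k => mul (lam k) (B (Fin.natAdd n i) k)) := by
        rw [← hS]
        exact P_of_bal (hsg _) (hl3 _)
      have hP2 : P (sumFin fun k => mul (lam k) (B (Fin.natAdd n i) k))
          (sumFin fun k => mul (lam k) (mv A (fun j => B (Fin.castAdd d j) k) i)) :=
        P_sum fun k => P_mul_left (lam k)
          (P_of_bal ((hB k).2.1 i) (bal_symm ((hB k).2.2 i)))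
      have hmv : mv A (fun j => w (Fin.castAdd d j)) i
          = sumFin fun k => mul (lam k) (mv A (fun j => B (Fin.castAdd d j) k) i) := by
        have hfun : (fun j => w (Fin.castAdd d j))
            = fun j => sumFin fun k => mul (B (Fin.castAdd d j) k) (lam k) :=
          funext fun j => hx j
        rw [hfun]
        exact mv_mix A (fun j k => B (Fin.castAdd d j) k) lam i
      rw [hmv]
      exact bal_symm (bal_of_P (P_trans hP1 hP2))
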